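/- Let Φ be a Young function and let g : Ω × ℝᴺ → ℝ satisfy: g(·,λ) measurable for all λ, g(ω,·) convex for a.e. ω, and |g(ω,λ)| ≤ c₀(1 + Φ(|λ|)) for all λ and a.e. ω, with c₀ > 0. Then g is locally Lipschitz in the second argument with the explicit estimate |g(ω,λ) − g(ω,ν)| ≤ 2Nc₀ · (1 + Φ(2(1+|λ|+|ν|)))/(1+|λ|+|ν|) · |λ−ν| for all λ,ν ∈ ℝᴺ and a.e. ω ∈ Ω. -/

import Mathlib

open MeasureTheory Filter Set Topology

noncomputable def luxNorm {α : Type*} [MeasurableSpace α] (Φ : ℝ → ℝ) (μ : Measure α)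
    (f : α → ℝ) : ℝ :=
  sInf {δ : ℝ | 0 < δ ∧ ∫⁻ a, ENNReal.ofReal (Φ (|f a| / δ)) ∂μ ≤ 1}

def MemLPhi {α : Type*} [MeasurableSpace α] (Φ : ℝ → ℝ) (μ : Measure α) (f : α → ℝ) : Prop :=
  Measurable f ∧ ∃ δ > 0, ∫⁻ a, ENNReal.ofReal (Φ (|f a| / δ)) ∂μ < ⊤

structure IsYoung (Φ : ℝ → ℝ) : Prop where
  continuousOn : ContinuousOn Φ (Ici 0)
  convexOn : ConvexOn ℝ (Ici 0) Φ
  map_zero : Φ 0 = 0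
  pos : ∀ t > 0, 0 < Φ t
  tendsto_zero : Tendsto (fun t => Φ t / t) (𝓝[>] (0:ℝ)) (𝓝 0)
  tendsto_top : Tendsto (fun t => Φ t / t) atTop atTop

structure IsYoungDensity (Φ φ : ℝ → ℝ) : Prop where
  mono : MonotoneOn φ (Ici 0)
  rightCont : ∀ t ≥ 0, ContinuousWithinAt φ (Ici t) t
  map_zero : φ 0 = 0
  pos : ∀ t > 0, 0 < φ t
  tendsto_top : Tendsto φ atTop atTop
  repr : ∀ t ≥ 0, Φ t = ∫ τ in (0:ℝ)..t, φ τ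

noncomputable def youngConj (Φ : ℝ → ℝ) (t : ℝ) : ℝ :=
  sSup {y : ℝ | ∃ s ≥ (0:ℝ), y = s * t - Φ s}

def Delta2 (Φ : ℝ → ℝ) : Prop := ∃ t₀ > 0, ∃ k > 2, ∀ t ≥ t₀, Φ (2 * t) ≤ k * Φ t

def DeltaPrime (Φ : ℝ → ℝ) : Prop :=
  ∃ β > 0, ∀ t ≥ (0:ℝ), ∀ s ≥ (0:ℝ), Φ (t * s) ≤ β * Φ t * Φ s

lemma young_nonneg {Φ : ℝ → ℝ} (hY : IsYoung Φ) {t : ℝ} (ht : 0 ≤ t) : 0 ≤ Φ t := by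
  rcases eq_or_lt_of_le ht with h | h
  · simp [← h, hY.map_zero]
  · exact (hY.pos t h).le

lemma young_mono {Φ : ℝ → ℝ} (hY : IsYoung Φ) {s t : ℝ} (hs : 0 ≤ s) (hst : s ≤ t) :
    Φ s ≤ Φ t := by
  rcases eq_or_lt_of_le hst with h | h
  · simp [h]
  · have ht : 0 < t := lt_of_le_of_lt hs h
    have hb0 : 0 ≤ s / t := div_nonneg hs ht.le
    have hb1 : s / t ≤ 1 := by
      rw [div_le_one ht]; exact hst
    have key := hY.convexOn.2 (mem_Ici.mpr le_rfl) (mem_Ici.mpr ht.le)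
      (by linarith : (0:ℝ) ≤ 1 - s / t) hb0 (by ring)
    have hst' : (1 - s / t) • (0:ℝ) + (s / t) • t = s := by
      field_simp
      simp only [smul_eq_mul, mul_zero, zero_add]
      field_simp
    rw [hst'] at key
    have hΦt : 0 ≤ Φ t := young_nonneg hY ht.le
    have : Φ s ≤ (s / t) * Φ t := by
      simpa [hY.map_zero, smul_eq_mul] using key
    nlinarith

theorem stmt10 {N : ℕ} {Ω : Type*} [MeasurableSpace Ω] (μ : Measure Ω)
    (Φ : ℝ → ℝ) (hY : IsYoung Φ)
    (g : Ω → EuclideanSpace ℝ (Fin N) → ℝ) (c₀ : ℝ) (hc₀ : 0 < c₀)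
    (hmeas : ∀ v, Measurable fun ω => g ω v)
    (hconv : ∀ᵐ ω ∂μ, ConvexOn ℝ univ (g ω))
    (hbound : ∀ᵐ ω ∂μ, ∀ v, |g ω v| ≤ c₀ * (1 + Φ ‖v‖)) :
    ∀ᵐ ω ∂μ, ∀ v w : EuclideanSpace ℝ (Fin N),
      |g ω v - g ω w| ≤
        2 * N * c₀ * ((1 + Φ (2 * (1 + ‖v‖ + ‖w‖))) / (1 + ‖v‖ + ‖w‖)) * ‖v - w‖ := by
  filter_upwards [hconv, hbound] with ω hc hb
  intro v w
  by_cases hvw : v = w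
  · subst hvw; simp
  · have hN : (1:ℝ) ≤ N := by
      have hN0 : N ≠ 0 := by
        rintro rfl
        exact hvw (Subsingleton.elim v w)
      exact_mod_cast Nat.one_le_iff_ne_zero.mpr hN0
    set d : ℝ := ‖v - w‖ with hd
    have hd0 : 0 < d := by
      rw [hd]; exact norm_sub_pos_iff.mpr hvw
    set R : ℝ := 1 + ‖v‖ + ‖w‖ with hR
    have hR0 : 0 < R := by
      have := norm_nonneg v; have := norm_nonneg w; rw [hR]; linarith
    have hvR : ‖v‖ ≤ R := by
      have := norm_nonneg w; rw [hR]; linarith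
    have hwR : ‖w‖ ≤ R := by
      have := norm_nonneg v; rw [hR]; linarith
    set M : ℝ := c₀ * (1 + Φ (2 * R)) with hM
    have hΦ2R : 0 ≤ Φ (2 * R) := young_nonneg hY (by linarith)
    have hM0 : 0 ≤ M := by rw [hM]; nlinarith
    have hboundM : ∀ x : EuclideanSpace ℝ (Fin N), ‖x‖ ≤ 2 * R → |g ω x| ≤ M := by
      intro x hx
      have h1 := hb x
      have h2 : Φ ‖x‖ ≤ Φ (2 * R) := young_mono hY (norm_nonneg x) hx
      rw [hM]; nlinarith
    have key : ∀ x y : EuclideanSpace ℝ (Fin N), ‖x‖ ≤ R → ‖y‖ ≤ R → ‖x - y‖ = d →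
        g ω x - g ω y ≤ 2 * M * d / R := by
      intro x y hx hy hxy
      set z : EuclideanSpace ℝ (Fin N) := x + (R / d) • (x - y) with hz
      have hRd : (0:ℝ) < R + d := by linarith
      have hzn : ‖z‖ ≤ 2 * R := by
        have hs : ‖(R / d) • (x - y)‖ = R := by
          rw [norm_smul, hxy, Real.norm_eq_abs, abs_of_pos (div_pos hR0 hd0)]
          field_simp
        calc ‖z‖ ≤ ‖x‖ + ‖(R / d) • (x - y)‖ := norm_add_le _ _
          _ ≤ R + R := by rw [hs]; linarith
          _ = 2 * R := by ring
      have hcomb : (R / (R + d)) • y + (d / (R + d)) • z = x := by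
        rw [hz]
        match_scalars <;> field_simp <;> ring
      have hconvineq := hc.2 (mem_univ y) (mem_univ z)
        (div_nonneg hR0.le hRd.le) (div_nonneg hd0.le hRd.le)
        (by field_simp)
      rw [hcomb] at hconvineq
      simp only [smul_eq_mul] at hconvineq
      have hgz := abs_le.1 (hboundM z hzn)
      have hgy := abs_le.1 (hboundM y (by linarith))
      have hsplit : R / (R + d) = 1 - d / (R + d) := by field_simp; ring
      rw [hsplit] at hconvineq
      have h1 : g ω x - g ω y ≤ (d / (R + d)) * (g ω z - g ω y) := by nlinarith
      have h2 : g ω z - g ω y ≤ 2 * M := by linarith [hgz.1, hgz.2, hgy.1, hgy.2]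
      have ht0 : (0:ℝ) ≤ d / (R + d) := div_nonneg hd0.le hRd.le
      have h3 : (d / (R + d)) * (g ω z - g ω y) ≤ (d / (R + d)) * (2 * M) :=
        mul_le_mul_of_nonneg_left h2 ht0
      have h4 : d / (R + d) ≤ d / R := by
        apply div_le_div_of_nonneg_left hd0.le hR0; linarith
      have h5 : (d / (R + d)) * (2 * M) ≤ (d / R) * (2 * M) := by nlinarith
      have h6 : (d / R) * (2 * M) = 2 * M * d / R := by ring
      linarith
    have kvw := key v w hvR hwR rfl
    have kwv := key w v hwR hvR (by rw [norm_sub_rev])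
    have habs : |g ω v - g ω w| ≤ 2 * M * d / R := by
      rw [abs_le]; constructor <;> linarith
    have hfin : 2 * M * d / R ≤ 2 * N * c₀ * ((1 + Φ (2 * R)) / R) * d := by
      have heq : 2 * (N:ℝ) * c₀ * ((1 + Φ (2 * R)) / R) * d = (N:ℝ) * (2 * M * d / R) := by
        rw [hM]; ring
      rw [heq]
      have h7 : 0 ≤ 2 * M * d / R := by positivity
      exact le_mul_of_one_le_left h7 hN
    linarith
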